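/- arXiv:2101.06946 — 5 statements merged into one kernel-verified Lean document; each statement's English description precedes it below -/
import Mathlib

section
/- Let n ≥ 3 be an integer. Let G ⊆ ℤ×ℤ be the set of all pairs (n−2k, n−2t) with integers 0 ≤ k ≤ n and 0 ≤ t ≤ n, with the single pair (n,n) removed. Let S ⊆ G be a nonempty subset that is downward closed in G, i.e., whenever (a,b) ∈ S and (a',b') ∈ G satisfy a' ≤ a and b' ≤ b, then (a',b') ∈ S. Then Σ_{(a,b)∈S} ( −2n − (n²+2n)·(a+b) ) ≥ 0, and equality holds if and only if S = G. -/
set_option linter.unusedTactic false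

/-- Edge weight of the flow certificate: `Hw n k t` is (twice) the flow on the horizontal
edge `(k,t) → (k+1,t)` of the grid `[0,n] × [0,n]`. -/
def Hw (n k t : ℕ) : ℤ :=
  if t = 0 then ((n:ℤ)+2) * k * ((n:ℤ) - k)
  else ((n:ℤ) - k) * (((n:ℤ)+2)*((k:ℤ)+1) - 1)

lemma Hw_self (n t : ℕ) : Hw n n t = 0 := by
  unfold Hw; split_ifs <;> ring

lemma div_identity (n k t : ℕ) (h : ¬(k = 0 ∧ t = 0)) :
    ((if k = 0 then 0 else Hw n (k-1) t) - Hw n k t)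
      + ((if t = 0 then 0 else Hw n (t-1) k) - Hw n t k)
      = 2*(((n:ℤ)+2)*((k:ℤ)+(t:ℤ)-(n:ℤ)) - 1) := by
  match k, t with
  | 0, 0 => exact absurd ⟨rfl, rfl⟩ h
  | 0, s+1 => simp only [Hw]; simp; push_cast; ring
  | j+1, 0 => simp only [Hw]; simp; push_cast; ring
  | j+1, s+1 => simp only [Hw]; simp; push_cast; ring

lemma telescope (n : ℕ) (c f : ℕ → ℤ) (hc : c n = 0) :
    ∑ k ∈ Finset.range n, c k * (f (k+1) - f k)
      = ∑ k ∈ Finset.range (n+1), ((if k = 0 then 0 else c (k-1)) - c k) * f k := by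
  rw [Finset.sum_range_succ' (fun k => ((if k = 0 then 0 else c (k-1)) - c k) * f k) n]
  simp only [Nat.succ_ne_zero, if_false, Nat.add_sub_cancel, if_pos rfl]
  have h2 : ∑ k ∈ Finset.range n, ((c (k+1) * f (k+1)) - (c k * f k))
      = c n * f n - c 0 * f 0 := Finset.sum_range_sub (fun k => c k * f k) n
  have h3 : ∑ k ∈ Finset.range n, c k * (f (k+1) - f k)
      = (∑ k ∈ Finset.range n, (c k - c (k+1)) * f (k+1))
        + ∑ k ∈ Finset.range n, ((c (k+1) * f (k+1)) - (c k * f k)) := by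
    rw [← Finset.sum_add_distrib]
    exact Finset.sum_congr rfl (fun k _ => by ring)
  rw [h3, h2, hc]
  simp

noncomputable def chi (n : ℕ) (S : Finset (ℤ × ℤ)) (k t : ℕ) : ℤ :=
  by classical exact if (((n:ℤ) - 2*(k:ℤ), (n:ℤ) - 2*(t:ℤ)) : ℤ × ℤ) ∈ S then 1 else 0


lemma key_identity (n : ℕ) (χ : ℕ → ℕ → ℤ) (h00 : χ 0 0 = 0) :
    ∑ k ∈ Finset.range (n+1), ∑ t ∈ Finset.range (n+1),
        (2*(((n:ℤ)+2)*((k:ℤ)+(t:ℤ)-(n:ℤ)) - 1)) * χ k t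
      = (∑ t ∈ Finset.range (n+1), ∑ k ∈ Finset.range n,
          Hw n k t * (χ (k+1) t - χ k t))
        + (∑ k ∈ Finset.range (n+1), ∑ t ∈ Finset.range n,
          Hw n t k * (χ k (t+1) - χ k t)) := by
  have hA : ∀ t, ∑ k ∈ Finset.range n, Hw n k t * (χ (k+1) t - χ k t)
      = ∑ k ∈ Finset.range (n+1),
          ((if k = 0 then 0 else Hw n (k-1) t) - Hw n k t) * χ k t :=
    fun t => telescope n (fun k => Hw n k t) (fun k => χ k t) (Hw_self n t)
  have hB : ∀ k, ∑ t ∈ Finset.range n, Hw n t k * (χ k (t+1) - χ k t)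
      = ∑ t ∈ Finset.range (n+1),
          ((if t = 0 then 0 else Hw n (t-1) k) - Hw n t k) * χ k t :=
    fun k => telescope n (fun t => Hw n t k) (fun t => χ k t) (Hw_self n k)
  calc ∑ k ∈ Finset.range (n+1), ∑ t ∈ Finset.range (n+1),
        (2*(((n:ℤ)+2)*((k:ℤ)+(t:ℤ)-(n:ℤ)) - 1)) * χ k t
      = ∑ k ∈ Finset.range (n+1), ∑ t ∈ Finset.range (n+1),
          ((((if k = 0 then 0 else Hw n (k-1) t) - Hw n k t) * χ k t)
            + (((if t = 0 then 0 else Hw n (t-1) k) - Hw n t k) * χ k t)) := by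
        refine Finset.sum_congr rfl (fun k _ => Finset.sum_congr rfl (fun t _ => ?_))
        by_cases h : k = 0 ∧ t = 0
        · obtain ⟨rfl, rfl⟩ := h
          simp [h00]
        · rw [← add_mul, div_identity n k t h]
    _ = (∑ k ∈ Finset.range (n+1), ∑ t ∈ Finset.range (n+1),
          ((if k = 0 then 0 else Hw n (k-1) t) - Hw n k t) * χ k t)
        + (∑ k ∈ Finset.range (n+1), ∑ t ∈ Finset.range (n+1),
          ((if t = 0 then 0 else Hw n (t-1) k) - Hw n t k) * χ k t) := by
        rw [← Finset.sum_add_distrib]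
        exact Finset.sum_congr rfl (fun k _ => Finset.sum_add_distrib)
    _ = _ := by
        rw [Finset.sum_comm (s := Finset.range (n+1)) (t := Finset.range (n+1))]
        congr 1
        · exact (Finset.sum_congr rfl (fun t _ => (hA t).symm))
        · exact (Finset.sum_congr rfl (fun k _ => (hB k).symm))

/-- Let `n ≥ 3`. Let `G ⊆ ℤ × ℤ` be the set of pairs `(n − 2k, n − 2t)` with
`0 ≤ k ≤ n`, `0 ≤ t ≤ n`, with the single pair `(n, n)` removed. For any nonempty subset
`S ⊆ G` which is downward closed in `G`, the sum `Σ_{(a,b) ∈ S} (−2n − (n² + 2n)(a + b))`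
is nonnegative, and it vanishes exactly when `S = G`. -/
theorem statement_2 (n : ℕ) (hn : 3 ≤ n)
    (G : Finset (ℤ × ℤ))
    (hG : G = ((Finset.range (n+1) ×ˢ Finset.range (n+1)).image
        (fun kt => ((n : ℤ) - 2 * kt.1, (n : ℤ) - 2 * kt.2))).erase ((n : ℤ), (n : ℤ)))
    (S : Finset (ℤ × ℤ)) (hSsub : S ⊆ G) (hSne : S.Nonempty)
    (hdc : ∀ p ∈ S, ∀ q ∈ G, q.1 ≤ p.1 → q.2 ≤ p.2 → q ∈ S) :
    0 ≤ ∑ p ∈ S, (-2 * (n : ℤ) - ((n : ℤ) ^ 2 + 2 * (n : ℤ)) * (p.1 + p.2)) ∧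
      ((∑ p ∈ S, (-2 * (n : ℤ) - ((n : ℤ) ^ 2 + 2 * (n : ℤ)) * (p.1 + p.2))) = 0 ↔ S = G) := by
  classical
  set w : ℤ × ℤ → ℤ := fun p => -2 * (n : ℤ) - ((n : ℤ) ^ 2 + 2 * (n : ℤ)) * (p.1 + p.2)
    with hw_def
  -- membership lemma for G
  have memG : ∀ k t : ℕ, k ≤ n → t ≤ n → ¬(k = 0 ∧ t = 0) →
      (((n:ℤ) - 2*(k:ℤ), (n:ℤ) - 2*(t:ℤ)) : ℤ × ℤ) ∈ G := by
    intro k t hk ht h0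
    rw [hG, Finset.mem_erase]
    constructor
    · intro hEq
      rw [Prod.mk.injEq] at hEq
      exact h0 (by constructor <;> omega)
    · exact Finset.mem_image.mpr ⟨(k,t), by
        simp [Finset.mem_product, Nat.lt_succ_iff, hk, ht], rfl⟩
  -- chi basics
  have h00 : chi n S 0 0 = 0 := by
    unfold chi
    rw [if_neg]
    intro hmem
    have := hSsub hmem
    rw [hG, Finset.mem_erase] at this
    exact this.1 (by norm_num)
  have chi_nonneg : ∀ k t : ℕ, 0 ≤ chi n S k t := by
    intro k t; unfold chi; split <;> norm_num
  -- monotonicity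
  have hmono_h : ∀ k t : ℕ, k < n → t ≤ n → 0 ≤ chi n S (k+1) t - chi n S k t := by
    intro k t hk ht
    unfold chi
    by_cases h : (((n:ℤ) - 2*(k:ℤ), (n:ℤ) - 2*(t:ℤ)) : ℤ × ℤ) ∈ S
    · have h2 : (((n:ℤ) - 2*((k+1:ℕ):ℤ), (n:ℤ) - 2*(t:ℤ)) : ℤ × ℤ) ∈ S := by
        refine hdc _ h _ (memG (k+1) t (by omega) ht (by omega)) ?_ ?_
        · show (n:ℤ) - 2*((k+1:ℕ):ℤ) ≤ (n:ℤ) - 2*(k:ℤ)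
          push_cast; linarith
        · exact le_refl _
      rw [if_pos h, if_pos h2]; norm_num
    · rw [if_neg h]; split <;> norm_num
  have hmono_v : ∀ k t : ℕ, t < n → k ≤ n → 0 ≤ chi n S k (t+1) - chi n S k t := by
    intro k t ht hk
    unfold chi
    by_cases h : (((n:ℤ) - 2*(k:ℤ), (n:ℤ) - 2*(t:ℤ)) : ℤ × ℤ) ∈ S
    · have h2 : (((n:ℤ) - 2*(k:ℤ), (n:ℤ) - 2*((t+1:ℕ):ℤ)) : ℤ × ℤ) ∈ S := by
        refine hdc _ h _ (memG k (t+1) hk (by omega) (by omega)) (le_refl _) ?_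
        show (n:ℤ) - 2*((t+1:ℕ):ℤ) ≤ (n:ℤ) - 2*(t:ℤ)
        push_cast; linarith
      rw [if_pos h, if_pos h2]; norm_num
    · rw [if_neg h]; split <;> norm_num
  -- nonnegativity / positivity of weights
  have hn0 : (0:ℤ) ≤ (n:ℤ) := Nat.cast_nonneg n
  have hHnn : ∀ k t : ℕ, k ≤ n → 0 ≤ Hw n k t := by
    intro k t hk
    have hk' : (k:ℤ) ≤ (n:ℤ) := by exact_mod_cast hk
    have hk0 : (0:ℤ) ≤ (k:ℤ) := Nat.cast_nonneg k
    have hnk : (0:ℤ) ≤ (n:ℤ)*(k:ℤ) := mul_nonneg hn0 hk0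
    unfold Hw
    split_ifs
    · exact mul_nonneg (mul_nonneg (by linarith) hk0) (by linarith)
    · exact mul_nonneg (by linarith) (by nlinarith)
  have hHpos : ∀ k t : ℕ, k < n → ¬(k = 0 ∧ t = 0) → 0 < Hw n k t := by
    intro k t hk h0
    have hk' : (k:ℤ) < (n:ℤ) := by exact_mod_cast hk
    have hk0 : (0:ℤ) ≤ (k:ℤ) := Nat.cast_nonneg k
    have hnk : (0:ℤ) ≤ (n:ℤ)*(k:ℤ) := mul_nonneg hn0 hk0
    unfold Hw
    split_ifs with ht
    · have hk1 : 1 ≤ k := by omega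
      have hk1' : (1:ℤ) ≤ (k:ℤ) := by exact_mod_cast hk1
      have : (0:ℤ) < (n:ℤ) - (k:ℤ) := by linarith
      exact mul_pos (mul_pos (by linarith) (by linarith)) this
    · exact mul_pos (by linarith) (by nlinarith)
  -- the two boundary sums
  set A := ∑ t ∈ Finset.range (n+1), ∑ k ∈ Finset.range n,
      Hw n k t * (chi n S (k+1) t - chi n S k t) with hA_def
  set B := ∑ k ∈ Finset.range (n+1), ∑ t ∈ Finset.range n,
      Hw n t k * (chi n S k (t+1) - chi n S k t) with hB_def
  have htermA : ∀ t ∈ Finset.range (n+1), ∀ k ∈ Finset.range n,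
      0 ≤ Hw n k t * (chi n S (k+1) t - chi n S k t) := by
    intro t ht k hk
    exact mul_nonneg (hHnn k t (le_of_lt (Finset.mem_range.mp hk)))
      (hmono_h k t (Finset.mem_range.mp hk) (Nat.lt_succ_iff.mp (Finset.mem_range.mp ht)))
  have htermB : ∀ k ∈ Finset.range (n+1), ∀ t ∈ Finset.range n,
      0 ≤ Hw n t k * (chi n S k (t+1) - chi n S k t) := by
    intro k hk t ht
    exact mul_nonneg (hHnn t k (le_of_lt (Finset.mem_range.mp ht)))
      (hmono_v k t (Finset.mem_range.mp ht) (Nat.lt_succ_iff.mp (Finset.mem_range.mp hk)))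
  have hAnn : 0 ≤ A := Finset.sum_nonneg fun t ht =>
    Finset.sum_nonneg fun k hk => htermA t ht k hk
  have hBnn : 0 ≤ B := Finset.sum_nonneg fun k hk =>
    Finset.sum_nonneg fun t ht => htermB k hk t ht
  -- the main identity
  have hinj : ∀ x ∈ Finset.range (n+1) ×ˢ Finset.range (n+1),
      ∀ y ∈ Finset.range (n+1) ×ˢ Finset.range (n+1),
      ((fun kt : ℕ × ℕ => (((n : ℤ) - 2 * kt.1, (n : ℤ) - 2 * kt.2) : ℤ × ℤ)) x
        = (fun kt : ℕ × ℕ => (((n : ℤ) - 2 * kt.1, (n : ℤ) - 2 * kt.2) : ℤ × ℤ)) y) → x = y := by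
    rintro ⟨x1, x2⟩ _ ⟨y1, y2⟩ _ hxy
    simp only [Prod.mk.injEq] at hxy ⊢
    obtain ⟨h1, h2⟩ := hxy
    constructor <;> omega
  have hSI : S ⊆ (Finset.range (n+1) ×ˢ Finset.range (n+1)).image
      (fun kt : ℕ × ℕ => (((n : ℤ) - 2 * kt.1, (n : ℤ) - 2 * kt.2) : ℤ × ℤ)) := by
    intro p hp
    have := hSsub hp
    rw [hG] at this
    exact Finset.mem_of_mem_erase this
  have main_eq : ∑ p ∈ S, w p = (n:ℤ) * (A + B) := by
    have step1 : ∑ p ∈ S, w p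
        = ∑ q ∈ Finset.range (n+1) ×ˢ Finset.range (n+1),
            (if (((n : ℤ) - 2 * (q.1:ℤ), (n : ℤ) - 2 * (q.2:ℤ)) : ℤ × ℤ) ∈ S
              then w (((n : ℤ) - 2 * (q.1:ℤ), (n : ℤ) - 2 * (q.2:ℤ)) : ℤ × ℤ) else 0) := by
      calc ∑ p ∈ S, w p
          = ∑ p ∈ ((Finset.range (n+1) ×ˢ Finset.range (n+1)).image
              (fun kt : ℕ × ℕ => (((n : ℤ) - 2 * kt.1, (n : ℤ) - 2 * kt.2) : ℤ × ℤ))) ∩ S,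
              w p := by rw [Finset.inter_eq_right.mpr hSI]
        _ = ∑ p ∈ ((Finset.range (n+1) ×ˢ Finset.range (n+1)).image
              (fun kt : ℕ × ℕ => (((n : ℤ) - 2 * kt.1, (n : ℤ) - 2 * kt.2) : ℤ × ℤ))),
              (if p ∈ S then w p else 0) := (Finset.sum_ite_mem _ _ _).symm
        _ = ∑ q ∈ Finset.range (n+1) ×ˢ Finset.range (n+1),
            (if (((n : ℤ) - 2 * (q.1:ℤ), (n : ℤ) - 2 * (q.2:ℤ)) : ℤ × ℤ) ∈ S
              then w (((n : ℤ) - 2 * (q.1:ℤ), (n : ℤ) - 2 * (q.2:ℤ)) : ℤ × ℤ) else 0) :=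
            Finset.sum_image hinj
    rw [step1, Finset.sum_product]
    have step2 : ∀ k t : ℕ,
        (if (((n : ℤ) - 2 * (k:ℤ), (n : ℤ) - 2 * (t:ℤ)) : ℤ × ℤ) ∈ S
          then w (((n : ℤ) - 2 * (k:ℤ), (n : ℤ) - 2 * (t:ℤ)) : ℤ × ℤ) else 0)
        = (n:ℤ) * ((2*(((n:ℤ)+2)*((k:ℤ)+(t:ℤ)-(n:ℤ)) - 1)) * chi n S k t) := by
      intro k t
      unfold chi
      split
      · rw [hw_def]; ring
      · ring
    calc ∑ k ∈ Finset.range (n+1), ∑ t ∈ Finset.range (n+1),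
          (if (((n : ℤ) - 2 * (k:ℤ), (n : ℤ) - 2 * (t:ℤ)) : ℤ × ℤ) ∈ S
            then w (((n : ℤ) - 2 * (k:ℤ), (n : ℤ) - 2 * (t:ℤ)) : ℤ × ℤ) else 0)
        = ∑ k ∈ Finset.range (n+1), ∑ t ∈ Finset.range (n+1),
            (n:ℤ) * ((2*(((n:ℤ)+2)*((k:ℤ)+(t:ℤ)-(n:ℤ)) - 1)) * chi n S k t) := by
          exact Finset.sum_congr rfl fun k _ => Finset.sum_congr rfl fun t _ => step2 k t
      _ = (n:ℤ) * ∑ k ∈ Finset.range (n+1), ∑ t ∈ Finset.range (n+1),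
            (2*(((n:ℤ)+2)*((k:ℤ)+(t:ℤ)-(n:ℤ)) - 1)) * chi n S k t := by
          rw [Finset.mul_sum]
          exact Finset.sum_congr rfl fun k _ => (Finset.mul_sum _ _ _).symm
      _ = (n:ℤ) * (A + B) := by
          rw [key_identity n (chi n S) h00, hA_def, hB_def]
  refine ⟨?_, ?_, ?_⟩
  · rw [main_eq]
    exact mul_nonneg hn0 (add_nonneg hAnn hBnn)
  · -- sum = 0 → S = G
    intro h0
    by_contra hne
    have hnpos : (0:ℤ) < (n:ℤ) := by exact_mod_cast (by omega : 0 < n)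
    have hAB : A + B = 0 := by
      rw [main_eq] at h0
      rcases mul_eq_zero.mp h0 with h | h
      · exact absurd h (by linarith)
      · exact h
    have hA0 : A = 0 := by linarith
    have hB0 : B = 0 := by linarith
    have hAterm0 : ∀ t ∈ Finset.range (n+1), ∀ k ∈ Finset.range n,
        Hw n k t * (chi n S (k+1) t - chi n S k t) = 0 := by
      intro t ht k hk
      have hin := (Finset.sum_eq_zero_iff_of_nonneg (fun t' ht' =>
        Finset.sum_nonneg fun k' hk' => htermA t' ht' k' hk')).mp hA0 t ht
      exact (Finset.sum_eq_zero_iff_of_nonneg (fun k' hk' => htermA t ht k' hk')).mp hin k hk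
    have hBterm0 : ∀ k ∈ Finset.range (n+1), ∀ t ∈ Finset.range n,
        Hw n t k * (chi n S k (t+1) - chi n S k t) = 0 := by
      intro k hk t ht
      have hin := (Finset.sum_eq_zero_iff_of_nonneg (fun k' hk' =>
        Finset.sum_nonneg fun t' ht' => htermB k' hk' t' ht')).mp hB0 k hk
      exact (Finset.sum_eq_zero_iff_of_nonneg (fun t' ht' => htermB k hk t' ht')).mp hin t ht
    -- bottom element of S
    have hGlb : ∀ p ∈ G, (n:ℤ) - 2*(n:ℤ) ≤ p.1 ∧ (n:ℤ) - 2*(n:ℤ) ≤ p.2 := by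
      intro p hp
      rw [hG] at hp
      obtain ⟨⟨a, b⟩, hab, rfl⟩ := Finset.mem_image.mp (Finset.mem_of_mem_erase hp)
      simp only [Finset.mem_product, Finset.mem_range, Nat.lt_succ_iff] at hab
      constructor <;> simp only [] <;> omega
    have hSnn : (((n:ℤ) - 2*((n:ℕ):ℤ), (n:ℤ) - 2*((n:ℕ):ℤ)) : ℤ × ℤ) ∈ S := by
      obtain ⟨p, hp⟩ := hSne
      have hb := hGlb p (hSsub hp)
      exact hdc p hp _ (memG n n le_rfl le_rfl (by omega)) hb.1 hb.2
    -- set of missing points, maximal element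
    obtain ⟨p0, hp0G, hp0S⟩ : ∃ p ∈ G, p ∉ S := by
      obtain ⟨x, hxG, hxS⟩ := Finset.exists_of_ssubset
        (Finset.ssubset_iff_subset_ne.mpr ⟨hSsub, hne⟩)
      exact ⟨x, hxG, hxS⟩
    set Z : Finset (ℕ × ℕ) := (Finset.range (n+1) ×ˢ Finset.range (n+1)).filter
      (fun q => ¬(q.1 = 0 ∧ q.2 = 0) ∧
        (((n:ℤ) - 2*(q.1:ℤ), (n:ℤ) - 2*(q.2:ℤ)) : ℤ × ℤ) ∉ S) with hZ_def
    have hZne : Z.Nonempty := by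
      rw [hG] at hp0G
      obtain ⟨⟨a, b⟩, hab, rfl⟩ := Finset.mem_image.mp (Finset.mem_of_mem_erase hp0G)
      refine ⟨(a, b), ?_⟩
      rw [hZ_def, Finset.mem_filter]
      refine ⟨hab, ?_, hp0S⟩
      intro hab0
      have := Finset.ne_of_mem_erase hp0G
      apply this
      obtain ⟨ha, hb⟩ := hab0
      simp only at ha hb
      subst ha; subst hb
      norm_num
    obtain ⟨⟨k, t⟩, hmemZ, hmax⟩ := Finset.exists_max_image Z (fun q => q.1 + q.2) hZne
    rw [hZ_def, Finset.mem_filter] at hmemZ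
    obtain ⟨hmemI, hne00, hnotS⟩ := hmemZ
    simp only [Finset.mem_product, Finset.mem_range, Nat.lt_succ_iff] at hmemI
    obtain ⟨hkn, htn⟩ := hmemI
    have hχ0 : chi n S k t = 0 := by unfold chi; rw [if_neg hnotS]
    -- (k,t) ≠ (n,n)
    have hktnn : ¬(k = n ∧ t = n) := by
      rintro ⟨rfl, rfl⟩
      exact hnotS hSnn
    rcases lt_or_eq_of_le hkn with hklt | hkeq
    · -- k < n : use horizontal edge
      have hc1 : chi n S (k+1) t = 1 := by
        unfold chi
        rw [if_pos]
        by_contra hmem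
        have hzin : ((k+1, t) : ℕ × ℕ) ∈ Z := by
          rw [hZ_def, Finset.mem_filter]
          exact ⟨by simp [Finset.mem_product, Nat.lt_succ_iff, htn]; omega,
            by omega, hmem⟩
        have := hmax _ hzin
        simp only at this
        omega
      have hterm := hAterm0 t (Finset.mem_range.mpr (by omega)) k (Finset.mem_range.mpr hklt)
      rw [hc1, hχ0] at hterm
      have := hHpos k t hklt hne00
      simp at hterm
      linarith
    · -- k = n, hence t < n : use vertical edge
      have htlt : t < n := by omega
      have hc1 : chi n S k (t+1) = 1 := by
        unfold chi
        rw [if_pos]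
        by_contra hmem
        have hzin : ((k, t+1) : ℕ × ℕ) ∈ Z := by
          rw [hZ_def, Finset.mem_filter]
          exact ⟨by simp [Finset.mem_product, Nat.lt_succ_iff]; omega,
            by omega, hmem⟩
        have := hmax _ hzin
        simp only at this
        omega
      have hterm := hBterm0 k (Finset.mem_range.mpr (by omega)) t (Finset.mem_range.mpr htlt)
      rw [hc1, hχ0] at hterm
      have := hHpos t k htlt (by omega)
      simp at hterm
      linarith
  · -- S = G → sum = 0
    intro hSG
    rw [main_eq]
    have hA0 : A = 0 := by
      rw [hA_def]
      refine Finset.sum_eq_zero fun t ht => Finset.sum_eq_zero fun k hk => ?_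
      by_cases h : k = 0 ∧ t = 0
      · obtain ⟨rfl, rfl⟩ := h
        have : Hw n 0 0 = 0 := by unfold Hw; simp
        rw [this, zero_mul]
      · have hkr := Finset.mem_range.mp hk
        have htr := Nat.lt_succ_iff.mp (Finset.mem_range.mp ht)
        have h1 : chi n S k t = 1 := by
          unfold chi; rw [if_pos (by rw [hSG]; exact memG k t (by omega) htr h)]
        have h2 : chi n S (k+1) t = 1 := by
          unfold chi; rw [if_pos (by rw [hSG]; exact memG (k+1) t (by omega) htr (by omega))]
        rw [h1, h2]; ring
    have hB0 : B = 0 := by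
      rw [hB_def]
      refine Finset.sum_eq_zero fun k hk => Finset.sum_eq_zero fun t ht => ?_
      by_cases h : k = 0 ∧ t = 0
      · obtain ⟨rfl, rfl⟩ := h
        have : Hw n 0 0 = 0 := by unfold Hw; simp
        rw [this, zero_mul]
      · have htr := Finset.mem_range.mp ht
        have hkr := Nat.lt_succ_iff.mp (Finset.mem_range.mp hk)
        have h1 : chi n S k t = 1 := by
          unfold chi; rw [if_pos (by rw [hSG]; exact memG k t hkr (by omega) h)]
        have h2 : chi n S k (t+1) = 1 := by
          unfold chi; rw [if_pos (by rw [hSG]; exact memG k (t+1) hkr (by omega) (by omega))]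
        rw [h1, h2]; ring
    rw [hA0, hB0]
    ring
end

section
/- Let k be a field and n ≥ 3 an integer. Let A = k[x₀,x₁,x₂,x₃]/(x₀·𝔪₀^{n−2} + 𝔪₀^{n−1}) with its induced grading. Then multiplication by x₀² defines a k-linear bijection from the homogeneous component A_{n−3} onto the homogeneous component A_{n−1}, and both components have dimension binomial(n,3) over k. -/
open MvPolynomial
open Pointwise

/-- The ideal `𝔪₀ = (x₁, x₂, x₃)` of `k[x₀, x₁, x₂, x₃]`. -/
noncomputable def idealM0 (k : Type*) [Field k] : Ideal (MvPolynomial (Fin 4) k) :=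
  Ideal.span {MvPolynomial.X 1, MvPolynomial.X 2, MvPolynomial.X 3}

/-- The ideal `x₀·𝔪₀^{n−2} + 𝔪₀^{n−1}` of `k[x₀, x₁, x₂, x₃]`, with `n = m + 3`. -/
noncomputable def idealJ (k : Type*) [Field k] (m : ℕ) : Ideal (MvPolynomial (Fin 4) k) :=
  Ideal.span {(MvPolynomial.X 0 : MvPolynomial (Fin 4) k)} * (idealM0 k) ^ (m + 1)
    + (idealM0 k) ^ (m + 2)

/-- The degree-`d` homogeneous component of the graded algebra
`A = k[x₀, x₁, x₂, x₃]/(x₀·𝔪₀^{n−2} + 𝔪₀^{n−1})`, with `n = m + 3`: the image of the space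
of homogeneous polynomials of degree `d` in the quotient. -/
noncomputable def Acomp (k : Type*) [Field k] (m d : ℕ) :
    Submodule k (MvPolynomial (Fin 4) k ⧸ idealJ k m) :=
  Submodule.map (Ideal.Quotient.mkₐ k (idealJ k m)).toLinearMap
    (MvPolynomial.homogeneousSubmodule (Fin 4) k d)

/-- Multiplication by (the class of) `x₀²` on `A`, as a `k`-linear map. -/
noncomputable def mulX0sq (k : Type*) [Field k] (m : ℕ) :
    (MvPolynomial (Fin 4) k ⧸ idealJ k m) →ₗ[k] (MvPolynomial (Fin 4) k ⧸ idealJ k m) :=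
  LinearMap.mulLeft k (Ideal.Quotient.mk (idealJ k m) (MvPolynomial.X 0 ^ 2))


section AuxStatement6

variable {k : Type*} [Field k]

variable {k : Type*} [Field k]

lemma degree_four (e : Fin 4 →₀ ℕ) : e.degree = e 0 + e 1 + e 2 + e 3 := by
  rw [Finsupp.degree_apply]
  rw [Finset.sum_subset (Finset.subset_univ _)
    (fun i _ hi => Finsupp.notMem_support_iff.mp hi)]
  exact Fin.sum_univ_four e

def Bset (n : ℕ) : Set (Fin 4 →₀ ℕ) := {e | e 0 = 0 ∧ e 1 + e 2 + e 3 = n}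

def genSet (m : ℕ) : Set (Fin 4 →₀ ℕ) :=
  {e | (e 0 = 1 ∧ e 1 + e 2 + e 3 = m + 1) ∨ (e 0 = 0 ∧ e 1 + e 2 + e 3 = m + 2)}

lemma image_mul_image (A B : Set (Fin 4 →₀ ℕ)) :
    ((fun s => monomial s (1 : k)) '' A) * ((fun s => monomial s (1 : k)) '' B)
      = (fun s => monomial s (1 : k)) '' (A + B) := by
  rw [← Set.image2_mul, Set.image2_image_left, Set.image2_image_right, ← Set.image2_add,
    Set.image_image2]
  apply Set.image2_congr
  intro a _ b _
  rw [monomial_mul, one_mul]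

lemma add_Bset (n : ℕ) :
    ({Finsupp.single 1 1, Finsupp.single 2 1, Finsupp.single 3 1} : Set (Fin 4 →₀ ℕ)) + Bset n
      = Bset (n + 1) := by
  ext e
  constructor
  · rintro ⟨a, ha, b, ⟨hb0, hbs⟩, rfl⟩
    rcases ha with rfl | rfl | rfl <;>
      refine ⟨?_, ?_⟩ <;>
      simp_all [Finsupp.add_apply, Finsupp.single_apply] <;> omega
  · rintro ⟨h0, hs⟩
    have hpos : 0 < e 1 ∨ 0 < e 2 ∨ 0 < e 3 := by omega
    rcases hpos with h | h | h
    · refine ⟨Finsupp.single 1 1, by simp, e - Finsupp.single 1 1, ⟨?_, ?_⟩, ?_⟩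
      · simp [Finsupp.tsub_apply, Finsupp.single_apply, h0]
      · simp [Finsupp.tsub_apply, Finsupp.single_apply]; omega
      · ext j; simp only [Finsupp.add_apply, Finsupp.tsub_apply, Finsupp.single_apply]
        rcases eq_or_ne (1 : Fin 4) j with rfl | hj
        · simp; omega
        · simp [hj]
    · refine ⟨Finsupp.single 2 1, by simp, e - Finsupp.single 2 1, ⟨?_, ?_⟩, ?_⟩
      · simp [Finsupp.tsub_apply, Finsupp.single_apply, h0]
      · simp [Finsupp.tsub_apply, Finsupp.single_apply]; omega
      · ext j; simp only [Finsupp.add_apply, Finsupp.tsub_apply, Finsupp.single_apply]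
        rcases eq_or_ne (2 : Fin 4) j with rfl | hj
        · simp; omega
        · simp [hj]
    · refine ⟨Finsupp.single 3 1, by simp, e - Finsupp.single 3 1, ⟨?_, ?_⟩, ?_⟩
      · simp [Finsupp.tsub_apply, Finsupp.single_apply, h0]
      · simp [Finsupp.tsub_apply, Finsupp.single_apply]; omega
      · ext j; simp only [Finsupp.add_apply, Finsupp.tsub_apply, Finsupp.single_apply]
        rcases eq_or_ne (3 : Fin 4) j with rfl | hj
        · simp; omega
        · simp [hj]

lemma pow_M (m : ℕ) :
    (idealM0 k) ^ m = Ideal.span ((fun s => monomial s (1 : k)) '' Bset m) := by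
  induction m with
  | zero =>
    have hB : Bset 0 = {(0 : Fin 4 →₀ ℕ)} := by
      ext e
      constructor
      · rintro ⟨h0, hs⟩
        have : e.degree = 0 := by rw [degree_four]; omega
        exact (Finsupp.degree_eq_zero_iff e).mp this
      · rintro rfl; exact ⟨rfl, rfl⟩
    have hmono : (monomial (0 : Fin 4 →₀ ℕ) (1 : k)) = 1 := by
      rw [monomial_zero', C_1]
    rw [pow_zero, hB, Set.image_singleton, hmono, Ideal.span_singleton_one, Ideal.one_eq_top]
  | succ n ih =>
    rw [pow_succ, mul_comm, ih]
    have hM : idealM0 k = Ideal.span ((fun s => monomial s (1 : k)) ''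
        {Finsupp.single 1 1, Finsupp.single 2 1, Finsupp.single 3 1}) := by
      rw [idealM0]
      congr 1
      simp only [Set.image_insert_eq, Set.image_singleton]
      rw [← X_pow_eq_monomial, ← X_pow_eq_monomial, ← X_pow_eq_monomial]
      simp
    rw [hM, Ideal.span_mul_span', image_mul_image, add_Bset]

variable {k : Type*} [Field k]

lemma single_add_Bset (n : ℕ) :
    ({Finsupp.single 0 1} : Set (Fin 4 →₀ ℕ)) + Bset n
      = {e | e 0 = 1 ∧ e 1 + e 2 + e 3 = n} := by
  ext e
  rw [Set.singleton_add]
  constructor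
  · rintro ⟨b, ⟨hb0, hbs⟩, rfl⟩
    constructor <;> simp [Finsupp.add_apply, Finsupp.single_apply, hb0] <;> omega
  · rintro ⟨h0, hs⟩
    refine ⟨e - Finsupp.single 0 1, ⟨?_, ?_⟩, ?_⟩
    · simp [Finsupp.tsub_apply, Finsupp.single_apply, h0]
    · simp [Finsupp.tsub_apply, Finsupp.single_apply]; omega
    · simp only [Set.mem_setOf_eq]
      ext j; simp only [Finsupp.add_apply, Finsupp.tsub_apply, Finsupp.single_apply]
      rcases eq_or_ne (0 : Fin 4) j with rfl | hj
      · simp; omega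
      · simp [hj]

lemma idealJ_eq (m : ℕ) :
    idealJ k m = Ideal.span ((fun s => monomial s (1 : k)) '' genSet m) := by
  rw [idealJ, pow_M, pow_M]
  have hX0 : ({X 0} : Set (MvPolynomial (Fin 4) k))
      = (fun s => monomial s (1 : k)) '' {Finsupp.single 0 1} := by
    rw [Set.image_singleton, ← X_pow_eq_monomial, pow_one]
  rw [hX0, Ideal.span_mul_span', image_mul_image, single_add_Bset, Ideal.add_eq_sup,
    ← Ideal.span_union, ← Set.image_union]
  rfl

lemma exists_sub (e : Fin 4 →₀ ℕ) (c N : ℕ) (hc : c ≤ e 0) (hN : N ≤ e 1 + e 2 + e 3) :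
    ∃ t : Fin 4 →₀ ℕ, t 0 = c ∧ t 1 + t 2 + t 3 = N ∧ t ≤ e := by
  refine ⟨Finsupp.single 0 c + Finsupp.single 1 (min (e 1) N)
    + Finsupp.single 2 (min (e 2) (N - min (e 1) N))
    + Finsupp.single 3 (N - min (e 1) N - min (e 2) (N - min (e 1) N)), ?_, ?_, ?_⟩
  · simp [Finsupp.add_apply, Finsupp.single_apply]
  · simp [Finsupp.add_apply, Finsupp.single_apply]
  · intro j
    fin_cases j <;> simp [Finsupp.add_apply, Finsupp.single_apply] <;> omega

lemma mem_idealJ_iff {m : ℕ} {p : MvPolynomial (Fin 4) k} :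
    p ∈ idealJ k m ↔ ∀ e ∈ p.support,
      (1 ≤ e 0 ∧ m + 1 ≤ e 1 + e 2 + e 3) ∨ m + 2 ≤ e 1 + e 2 + e 3 := by
  rw [idealJ_eq, mem_ideal_span_monomial_image]
  refine forall₂_congr fun e _ => ⟨?_, ?_⟩
  · rintro ⟨s, hs, hse⟩
    have h0 := hse 0
    have h1 := hse 1
    have h2 := hse 2
    have h3 := hse 3
    rcases hs with ⟨hs0, hss⟩ | ⟨hs0, hss⟩
    · left; omega
    · right; omega
  · rintro (⟨h0, hs⟩ | hs)
    · obtain ⟨t, ht0, hts, hte⟩ := exists_sub e 1 (m + 1) h0 hs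
      exact ⟨t, Or.inl ⟨ht0, hts⟩, hte⟩
    · obtain ⟨t, ht0, hts, hte⟩ := exists_sub e 0 (m + 2) (Nat.zero_le _) hs
      exact ⟨t, Or.inr ⟨ht0, hts⟩, hte⟩

variable {k : Type*} [Field k]

lemma hom_support_degree {n : ℕ} {p : MvPolynomial (Fin 4) k}
    (hp : p ∈ homogeneousSubmodule (Fin 4) k n) {e : Fin 4 →₀ ℕ} (he : e ∈ p.support) :
    e 0 + e 1 + e 2 + e 3 = n := by
  rw [← degree_four, Finsupp.degree_eq_weight_one]
  exact hp (mem_support_iff.mp he)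

lemma eq_zero_of_mem_J {m : ℕ} {p : MvPolynomial (Fin 4) k}
    (hp : p ∈ homogeneousSubmodule (Fin 4) k m) (h : p ∈ idealJ k m) : p = 0 := by
  rw [mem_idealJ_iff] at h
  rw [← support_eq_empty, Finset.eq_empty_iff_forall_notMem]
  intro e he
  have hd := hom_support_degree hp he
  have := h e he
  omega

lemma eq_zero_of_mul_mem_J {m : ℕ} {p : MvPolynomial (Fin 4) k}
    (hp : p ∈ homogeneousSubmodule (Fin 4) k m) (h : X 0 ^ 2 * p ∈ idealJ k m) : p = 0 := by
  rw [mem_idealJ_iff] at h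
  rw [← support_eq_empty, Finset.eq_empty_iff_forall_notMem]
  intro e he
  have hd := hom_support_degree hp he
  have hmem : (Finsupp.single 0 2 + e) ∈ (X (0 : Fin 4) ^ 2 * p).support := by
    rw [X_pow_eq_monomial, mem_support_iff, coeff_monomial_mul, one_mul]
    exact mem_support_iff.mp he
  have h2 := h _ hmem
  simp [Finsupp.add_apply, Finsupp.single_apply] at h2
  omega

lemma mulX0sq_mk (m : ℕ) (p : MvPolynomial (Fin 4) k) :
    mulX0sq k m (Ideal.Quotient.mk (idealJ k m) p)
      = Ideal.Quotient.mk (idealJ k m) (X 0 ^ 2 * p) := by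
  rw [mulX0sq, LinearMap.mulLeft_apply, ← map_mul]

lemma statement6_injOn (m : ℕ) : Set.InjOn (mulX0sq k m) (Acomp k m m) := by
  rintro x ⟨p, hp, rfl⟩ y ⟨q, hq, rfl⟩ h
  simp only [AlgHom.toLinearMap_apply, Ideal.Quotient.mkₐ_eq_mk] at h ⊢
  rw [mulX0sq_mk, mulX0sq_mk, Ideal.Quotient.eq] at h
  have hsub : X 0 ^ 2 * p - X 0 ^ 2 * q = X 0 ^ 2 * (p - q) := by ring
  rw [hsub] at h
  have := eq_zero_of_mul_mem_J (Submodule.sub_mem _ hp hq) h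
  rw [sub_eq_zero] at this
  rw [this]

lemma statement6_map (m : ℕ) :
    Submodule.map (mulX0sq k m) (Acomp k m m) = Acomp k m (m + 2) := by
  apply le_antisymm
  · rintro _ ⟨_, ⟨p, hp, rfl⟩, rfl⟩
    simp only [AlgHom.toLinearMap_apply, Ideal.Quotient.mkₐ_eq_mk, mulX0sq_mk]
    exact ⟨X 0 ^ 2 * p, (add_comm 2 m) ▸ ((isHomogeneous_X_pow (0 : Fin 4) 2 (R := k)).mul hp), by
      simp [AlgHom.toLinearMap_apply, Ideal.Quotient.mkₐ_eq_mk]⟩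
  · rintro _ ⟨p, hp, rfl⟩
    rw [AlgHom.toLinearMap_apply, Ideal.Quotient.mkₐ_eq_mk, ← support_sum_monomial_coeff p,
      map_sum]
    apply Submodule.sum_mem
    intro e he
    have hd := hom_support_degree hp he
    set c := coeff e p with hc
    by_cases hrest : e 1 + e 2 + e 3 ≤ m
    · have he0 : 2 ≤ e 0 := by omega
      set e' := e - Finsupp.single 0 2 with he'
      have hee : e = Finsupp.single 0 2 + e' := by
        ext j
        rcases eq_or_ne (0 : Fin 4) j with rfl | hj
        · simp [he', Finsupp.add_apply, Finsupp.tsub_apply, Finsupp.single_apply]; omega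
        · simp [he', Finsupp.add_apply, Finsupp.tsub_apply, Finsupp.single_apply, hj]
    
      refine ⟨Ideal.Quotient.mk _ (monomial e' c), ⟨monomial e' c, ?_, ?_⟩, ?_⟩
      · apply isHomogeneous_monomial
        rw [degree_four]
        simp [he', Finsupp.tsub_apply, Finsupp.single_apply]
        omega
      · simp [AlgHom.toLinearMap_apply, Ideal.Quotient.mkₐ_eq_mk]
      · rw [mulX0sq_mk, X_pow_eq_monomial, monomial_mul, one_mul, ← hee]
    · have hJ : monomial e c ∈ idealJ k m := by
        rw [mem_idealJ_iff]
        intro f hf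
        have hfe : f = e := by
          classical
          rcases Finset.mem_singleton.mp (by
            simpa [support_monomial, hc, mem_support_iff.mp he] using hf) with h
          exact h
        subst hfe
        omega
      have : Ideal.Quotient.mk (idealJ k m) (monomial e (coeff e p)) = 0 :=
        Ideal.Quotient.eq_zero_iff_mem.mpr hJ
      rw [this]
      exact Submodule.zero_mem _

lemma degree_eq_sum (f : Fin 4 →₀ ℕ) : f.degree = f.sum fun _ => id := rfl

noncomputable def degreeSetEquivSym (d : ℕ) :
    {x : Fin 4 →₀ ℕ | x.degree = d} ≃ Sym (Fin 4) d where
  toFun e := ⟨Finsupp.toMultiset e.1, by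
    rw [Finsupp.card_toMultiset, ← degree_eq_sum]; exact e.2⟩
  invFun s := ⟨Multiset.toFinsupp s.1, by
    show Finsupp.degree _ = d
    rw [degree_eq_sum, ← Finsupp.card_toMultiset, Multiset.toFinsupp_toMultiset]
    exact s.2⟩
  left_inv e := Subtype.ext (Finsupp.toMultiset_toFinsupp e.1)
  right_inv s := Subtype.ext (Multiset.toFinsupp_toMultiset s.1)

lemma finrank_homog (d : ℕ) :
    Module.finrank k ↥(homogeneousSubmodule (Fin 4) k d) = (d + 3).choose 3 := by
  classical
  haveI : Fintype ↥{x : Fin 4 →₀ ℕ | x.degree = d} :=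
    Fintype.ofEquiv _ (degreeSetEquivSym d).symm
  have hb : Module.finrank k ↥(restrictSupport k {x : Fin 4 →₀ ℕ | x.degree = d})
      = Fintype.card ↥{x : Fin 4 →₀ ℕ | x.degree = d} :=
    Module.finrank_eq_card_basis (basisRestrictSupport k _)
  have hcard : Fintype.card ↥{x : Fin 4 →₀ ℕ | x.degree = d} = (d + 3).choose 3 := by
    rw [Fintype.card_congr (degreeSetEquivSym d), Sym.card_sym_eq_choose]
    rw [Fintype.card_fin, show 4 + d - 1 = d + 3 by omega]
    have h := Nat.choose_symm (Nat.le_add_right d 3)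
    rw [show d + 3 - d = 3 by omega] at h
    exact h.symm
  rw [homogeneousSubmodule_eq_finsupp_supported]
  exact hb.trans hcard

lemma fin_homog (d : ℕ) : Module.Finite k ↥(homogeneousSubmodule (Fin 4) k d) := by
  classical
  haveI : Fintype ↥{x : Fin 4 →₀ ℕ | x.degree = d} :=
    Fintype.ofEquiv _ (degreeSetEquivSym d).symm
  rw [homogeneousSubmodule_eq_finsupp_supported]
  have : Module.Finite k ↥(restrictSupport k {x : Fin 4 →₀ ℕ | x.degree = d}) :=
    Module.Finite.of_basis (basisRestrictSupport k _)
  exact this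

lemma finrank_Acomp_m (m : ℕ) : Module.finrank k ↥(Acomp k m m) = (m + 3).choose 3 := by
  haveI := fin_homog (k := k) m
  let f : ↥(homogeneousSubmodule (Fin 4) k m) →ₗ[k] (MvPolynomial (Fin 4) k ⧸ idealJ k m) :=
    (Ideal.Quotient.mkₐ k (idealJ k m)).toLinearMap ∘ₗ (homogeneousSubmodule (Fin 4) k m).subtype
  have hrange : LinearMap.range f = Acomp k m m := by
    rw [Acomp, LinearMap.range_comp, Submodule.range_subtype]
  have hinj : Function.Injective f := by
    intro x y h
    simp only [f, LinearMap.coe_comp, Function.comp_apply, Submodule.coe_subtype,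
      AlgHom.toLinearMap_apply, Ideal.Quotient.mkₐ_eq_mk] at h
    rw [Ideal.Quotient.eq] at h
    have := eq_zero_of_mem_J (Submodule.sub_mem _ x.2 y.2) h
    exact Subtype.ext (by rwa [sub_eq_zero] at this)
  rw [← hrange, LinearMap.finrank_range_of_inj hinj, finrank_homog]

lemma fin_Acomp_m (m : ℕ) : Module.Finite k ↥(Acomp k m m) := by
  haveI := fin_homog (k := k) m
  rw [Acomp]
  exact Module.Finite.map _ _

lemma finrank_Acomp_m2 (m : ℕ) :
    Module.finrank k ↥(Acomp k m (m + 2)) = (m + 3).choose 3 := by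
  haveI := fin_Acomp_m (k := k) m
  let g : ↥(Acomp k m m) →ₗ[k] (MvPolynomial (Fin 4) k ⧸ idealJ k m) :=
    (mulX0sq k m) ∘ₗ (Acomp k m m).subtype
  have hrange : LinearMap.range g = Acomp k m (m + 2) := by
    rw [LinearMap.range_comp, Submodule.range_subtype, statement6_map]
  have hinj : Function.Injective g := fun x y h =>
    Subtype.ext (statement6_injOn m x.2 y.2 h)
  rw [← hrange, LinearMap.finrank_range_of_inj hinj, finrank_Acomp_m]

end AuxStatement6

/-- Let `k` be a field and `n = m + 3 ≥ 3`. In the graded algebra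
`A = k[x₀, x₁, x₂, x₃]/(x₀·𝔪₀^{n−2} + 𝔪₀^{n−1})`, multiplication by `x₀²` defines a
`k`-linear bijection from `A_{n−3}` onto `A_{n−1}`, and both components have dimension
`binomial(n, 3)` over `k`. -/
theorem statement_6 {k : Type*} [Field k] (m : ℕ) :
    Set.InjOn (mulX0sq k m) (Acomp k m m) ∧
    Submodule.map (mulX0sq k m) (Acomp k m m) = Acomp k m (m + 2) ∧
    Module.finrank k ↥(Acomp k m m) = (m + 3).choose 3 ∧
    Module.finrank k ↥(Acomp k m (m + 2)) = (m + 3).choose 3 :=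
  ⟨statement6_injOn m, statement6_map m, finrank_Acomp_m m, finrank_Acomp_m2 m⟩
end

section
/- Let k be a field, R = k[x₀,…,x_N] with N ≥ 1, and let F ∈ R be a nonzero homogeneous polynomial of degree d ≥ 2. Let J ⊆ R be the Jacobian ideal generated by the partial derivatives ∂F/∂x₀,…,∂F/∂x_N, and let J^sat = {f ∈ R : 𝔪^r·f ⊆ J for some r ≥ 0} be its saturation with respect to the irrelevant maximal ideal 𝔪 = (x₀,…,x_N). Suppose there is an integer m with 0 ≤ m < d−1 such that: (a) the only (N+1)-tuple (a₀,…,a_N) of homogeneous polynomials of degree 2m with Σᵢ aᵢ·∂F/∂xᵢ = 0 is the zero tuple; and (b) there exist nonzero homogeneous polynomials h₁, h₂ ∈ J^sat of degree m having no common non-unit factor. Then for every homogeneous polynomial g of degree d−1: g ∈ J if and only if g·h₁ ∈ J and g·h₂ ∈ J (equivalently, if and only if g·h ∈ J for every homogeneous h ∈ J^sat of degree m). -/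
open MvPolynomial

/-- The Jacobian ideal of `F`, generated by the partial derivatives `∂F/∂xᵢ`. -/
noncomputable def jacobianIdeal {k : Type*} [Field k] {n : ℕ}
    (F : MvPolynomial (Fin n) k) : Ideal (MvPolynomial (Fin n) k) :=
  Ideal.span (Set.range fun i => (MvPolynomial.pderiv i) F)

/-- The irrelevant maximal ideal `𝔪 = (x₀, …, x_N)`. -/
noncomputable def irrelevantIdeal (k : Type*) [Field k] (n : ℕ) :
    Ideal (MvPolynomial (Fin n) k) :=
  Ideal.span (Set.range (MvPolynomial.X : Fin n → MvPolynomial (Fin n) k))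

section Aux

variable {σ R : Type*} [CommRing R]

lemma Finsupp.degree_add' (a b : σ →₀ ℕ) :
    (a + b).degree = a.degree + b.degree := by
  have h := Finsupp.degree_eq_weight_one (R := ℕ) (σ := σ)
  rw [show (a + b).degree = Finsupp.degree (a + b) from rfl, h, map_add]

lemma Finsupp.degree_single' (i : σ) (n : ℕ) :
    (Finsupp.single i n).degree = n := by
  rw [Finsupp.degree_eq_weight_one, Finsupp.weight_apply,
    Finsupp.sum_single_index] <;> simp

/-- Partial derivative of a homogeneous polynomial is homogeneous of degree one less. -/
lemma pderiv_isHomogeneous [DecidableEq σ] {F : MvPolynomial σ R} {d : ℕ}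
    (hF : F.IsHomogeneous d) (i : σ) :
    ((MvPolynomial.pderiv i) F).IsHomogeneous (d - 1) := by
  classical
  rw [F.as_sum, map_sum]
  apply MvPolynomial.IsHomogeneous.sum
  intro s hs
  rw [pderiv_monomial]
  by_cases hsi : s i = 0
  · simp only [hsi, Nat.cast_zero, mul_zero, map_zero]
    exact isHomogeneous_zero _ _ _
  · apply isHomogeneous_monomial
    have hdeg : s.degree = d := by
      rw [Finsupp.degree_eq_weight_one]
      exact hF (MvPolynomial.mem_support_iff.mp hs)
    have hle : Finsupp.single i 1 ≤ s := by
      rw [Finsupp.single_le_iff]; omega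
    have hc : (s - Finsupp.single i 1) + Finsupp.single i 1 = s :=
      tsub_add_cancel_of_le hle
    have := congrArg Finsupp.degree hc
    rw [Finsupp.degree_add', Finsupp.degree_single'] at this
    omega

/-- The homogeneous component of a product with a homogeneous polynomial. -/
lemma homogeneousComponent_mul_right {p a : MvPolynomial σ R} {e : ℕ}
    (hp : p.IsHomogeneous e) (m : ℕ) :
    homogeneousComponent (m + e) (a * p) = homogeneousComponent m a * p := by
  classical
  have hsum : a * p
      = ∑ i ∈ Finset.range (a.totalDegree + 1), homogeneousComponent i a * p := by
    rw [← Finset.sum_mul, sum_homogeneousComponent]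
  rw [hsum, map_sum]
  have hterm : ∀ i, homogeneousComponent (m + e) (homogeneousComponent i a * p)
      = if m + e = i + e then homogeneousComponent i a * p else 0 := by
    intro i
    exact homogeneousComponent_of_mem
      ((mem_homogeneousSubmodule _ _).mpr
        ((homogeneousComponent_isHomogeneous i a).mul hp))
  rw [Finset.sum_congr rfl fun i _ => hterm i]
  rw [Finset.sum_eq_single m]
  · simp
  · intro i _ hi
    rw [if_neg]; omega
  · intro hm
    rw [Finset.mem_range, not_lt] at hm
    rw [homogeneousComponent_eq_zero _ _ (by omega)]
    simp

lemma isHomogeneous_self_component {p : MvPolynomial σ R} {n : ℕ}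
    (hp : p.IsHomogeneous n) : homogeneousComponent n p = p := by
  rw [homogeneousComponent_of_mem ((mem_homogeneousSubmodule _ _).mpr hp), if_pos rfl]

end Aux

/-- Let `R = k[x₀, …, x_N]` (`N ≥ 1`) and let `F ∈ R` be a nonzero homogeneous
polynomial of degree `d ≥ 2`, with Jacobian ideal `J`. Suppose there is `0 ≤ m < d − 1` with:
(a) the only tuple `(a₀, …, a_N)` of homogeneous polynomials of degree `2m` with
`Σ aᵢ·∂F/∂xᵢ = 0` is zero; and (b) there are nonzero homogeneous `h₁, h₂` of degree `m`
in the saturation `J^sat` with no common non-unit factor. Then for every homogeneous `g` of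
degree `d − 1`: `g ∈ J ↔ (g·h₁ ∈ J ∧ g·h₂ ∈ J)`. -/
theorem statement_8 {k : Type*} [Field k] (N d m : ℕ) (hN : 1 ≤ N) (hd : 2 ≤ d)
    (hm : m < d - 1)
    (F : MvPolynomial (Fin (N + 1)) k) (hF0 : F ≠ 0) (hFhom : F.IsHomogeneous d)
    (hsyz : ∀ a : Fin (N + 1) → MvPolynomial (Fin (N + 1)) k,
      (∀ i, (a i).IsHomogeneous (2 * m)) →
      (∑ i, a i * (MvPolynomial.pderiv i) F) = 0 → ∀ i, a i = 0)
    (h₁ h₂ : MvPolynomial (Fin (N + 1)) k)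
    (hh₁0 : h₁ ≠ 0) (hh₂0 : h₂ ≠ 0)
    (hh₁ : h₁.IsHomogeneous m) (hh₂ : h₂.IsHomogeneous m)
    (hsat₁ : ∃ r : ℕ, ∀ f ∈ (irrelevantIdeal k (N + 1)) ^ r, f * h₁ ∈ jacobianIdeal F)
    (hsat₂ : ∃ r : ℕ, ∀ f ∈ (irrelevantIdeal k (N + 1)) ^ r, f * h₂ ∈ jacobianIdeal F)
    (hnocommon : ∀ c : MvPolynomial (Fin (N + 1)) k, c ∣ h₁ → c ∣ h₂ → IsUnit c) :
    ∀ g : MvPolynomial (Fin (N + 1)) k, g.IsHomogeneous (d - 1) →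
      (g ∈ jacobianIdeal F ↔ (g * h₁ ∈ jacobianIdeal F ∧ g * h₂ ∈ jacobianIdeal F)) := by
  intro g hg
  constructor
  · intro hgJ
    exact ⟨Ideal.mul_mem_right _ _ hgJ, Ideal.mul_mem_right _ _ hgJ⟩
  rintro ⟨hg1, hg2⟩
  set v : Fin (N + 1) → MvPolynomial (Fin (N + 1)) k :=
    fun i => (MvPolynomial.pderiv i) F with hv
  have hvhom : ∀ i, (v i).IsHomogeneous (d - 1) := fun i => pderiv_isHomogeneous hFhom i
  -- extract homogeneous degree-m coefficients for g*h₁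
  have key : ∀ h : MvPolynomial (Fin (N + 1)) k, h.IsHomogeneous m →
      g * h ∈ jacobianIdeal F →
      ∃ a : Fin (N + 1) → MvPolynomial (Fin (N + 1)) k,
        (∀ i, (a i).IsHomogeneous m) ∧ ∑ i, a i * v i = g * h := by
    intro h hhom hmem
    rw [jacobianIdeal] at hmem
    rw [Ideal.mem_span_range_iff_exists_fun] at hmem
    obtain ⟨a, ha⟩ := hmem
    refine ⟨fun i => homogeneousComponent m (a i),
      fun i => homogeneousComponent_isHomogeneous m (a i), ?_⟩
    have hgh : (g * h).IsHomogeneous (m + (d - 1)) := by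
      rw [Nat.add_comm m (d - 1)]
      exact hg.mul hhom
    calc ∑ i, homogeneousComponent m (a i) * v i
        = ∑ i, homogeneousComponent (m + (d - 1)) (a i * v i) := by
          refine Finset.sum_congr rfl fun i _ => ?_
          rw [homogeneousComponent_mul_right (hvhom i)]
      _ = homogeneousComponent (m + (d - 1)) (∑ i, a i * v i) := (map_sum _ _ _).symm
      _ = g * h := by
          have ha' : ∑ i, a i * v i = g * h := by
            simpa [smul_eq_mul] using ha
          rw [ha', isHomogeneous_self_component hgh]
  obtain ⟨a, hahom, ha⟩ := key h₁ hh₁ hg1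
  obtain ⟨b, hbhom, hb⟩ := key h₂ hh₂ hg2
  -- the syzygy
  have hczero : ∀ i, a i * h₂ - b i * h₁ = 0 := by
    apply hsyz
    · intro i
      have : (a i * h₂ - b i * h₁).IsHomogeneous (m + m) :=
        ((hahom i).mul hh₂).sub ((hbhom i).mul hh₁)
      rwa [two_mul]
    · have : ∑ i, (a i * h₂ - b i * h₁) * v i
          = h₂ * (∑ i, a i * v i) - h₁ * (∑ i, b i * v i) := by
        rw [Finset.mul_sum, Finset.mul_sum, ← Finset.sum_sub_distrib]
        exact Finset.sum_congr rfl fun i _ => by ring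
      show ∑ i, (a i * h₂ - b i * h₁) * v i = 0
      rw [this, ha, hb]
      ring
  -- h₁ divides each a i
  have hrel : IsRelPrime h₁ h₂ := fun c hc1 hc2 => hnocommon c hc1 hc2
  have hdvd : ∀ i, h₁ ∣ a i := by
    intro i
    have : a i * h₂ = b i * h₁ := by
      have := hczero i
      linear_combination this
    exact hrel.dvd_of_dvd_mul_right ⟨b i, by linear_combination this⟩
  choose c hc using hdvd
  have hgc : g = ∑ i, c i * v i := by
    apply mul_left_cancel₀ hh₁0
    calc h₁ * g = ∑ i, a i * v i := by rw [mul_comm]; exact ha.symm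
      _ = h₁ * ∑ i, c i * v i := by
          rw [Finset.mul_sum]
          exact Finset.sum_congr rfl fun i _ => by rw [hc i]; ring
  rw [hgc]
  refine Ideal.sum_mem _ fun i _ => Ideal.mul_mem_left _ _ ?_
  exact Ideal.subset_span ⟨i, rfl⟩
end

section
/- Let k be a field, n ≥ 2 an integer, and φ : Matrix n n k → Matrix n n k a k-linear map. Let P ∈ k[x_{ij} : 1 ≤ i,j ≤ n] be the determinant of the n×n matrix of linear forms whose (i,j) entry is the (i,j) coordinate of φ applied to the generic matrix X = (x_{ij}). Then φ is bijective if and only if for every nonzero v ∈ Matrix n n k, the directional derivative Σ_{i,j} v_{ij}·∂P/∂x_{ij} is a nonzero polynomial. -/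
open Matrix MvPolynomial

section Aux

variable {k : Type*} [Field k]

/-- Product rule for `pderiv` over a finite product. -/
theorem st16_pderiv_prod {σ : Type*} [DecidableEq σ] {ι : Type*} [DecidableEq ι] (p : σ)
    (s : Finset ι) (f : ι → MvPolynomial σ k) :
    pderiv p (∏ i ∈ s, f i) = ∑ i ∈ s, pderiv p (f i) * ∏ j ∈ s.erase i, f j := by
  classical
  induction s using Finset.induction_on with
  | empty => simp
  | @insert a s ha ih =>
    rw [Finset.prod_insert ha, pderiv_mul, ih, Finset.sum_insert ha, Finset.erase_insert ha,
      Finset.mul_sum]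
    congr 1
    refine Finset.sum_congr rfl fun i hi => ?_
    rw [Finset.erase_insert_of_ne (by rintro rfl; exact ha hi),
      Finset.prod_insert (fun h => ha (Finset.mem_of_mem_erase h))]
    ring

/-- Expansion of the determinant of a column update. -/
theorem st16_det_updateColumn {R : Type*} [CommRing R] {m : ℕ}
    (M : Matrix (Fin m) (Fin m) R) (c : Fin m) (g : Fin m → R) :
    (M.updateCol c g).det =
      ∑ σ : Equiv.Perm (Fin m),
        ((Equiv.Perm.sign σ : ℤ) : R) * (g (σ c) * ∏ j ∈ Finset.univ.erase c, M (σ j) j) := by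
  rw [det_apply']
  refine Finset.sum_congr rfl fun σ _ => ?_
  congr 1
  rw [← Finset.mul_prod_erase Finset.univ _ (Finset.mem_univ c)]
  congr 1
  · exact updateCol_self ..
  · exact Finset.prod_congr rfl fun j hj => by
      rw [updateCol_apply, if_neg (Finset.ne_of_mem_erase hj)]

/-- Derivative of a determinant. -/
theorem st16_pderiv_det {m : ℕ} {σ : Type*} [DecidableEq σ] (p : σ)
    (M : Matrix (Fin m) (Fin m) (MvPolynomial σ k)) :
    pderiv p M.det = ∑ c, (M.updateCol c fun r => pderiv p (M r c)).det := by
  classical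
  have hsign : ∀ τ : Equiv.Perm (Fin m),
      pderiv p (((Equiv.Perm.sign τ : ℤ) : MvPolynomial σ k)) = 0 := by
    intro τ
    rw [← map_intCast (C : k →+* MvPolynomial σ k)]
    exact pderiv_C
  rw [det_apply', map_sum]
  have h1 : ∀ τ : Equiv.Perm (Fin m),
      pderiv p (((Equiv.Perm.sign τ : ℤ) : MvPolynomial σ k) * ∏ i, M (τ i) i)
        = ∑ c, ((Equiv.Perm.sign τ : ℤ) : MvPolynomial σ k) *
            (pderiv p (M (τ c) c) * ∏ j ∈ Finset.univ.erase c, M (τ j) j) := by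
    intro τ
    rw [pderiv_mul, hsign, zero_mul, zero_add, st16_pderiv_prod, Finset.mul_sum]
  simp_rw [h1]
  rw [Finset.sum_comm]
  refine Finset.sum_congr rfl fun c _ => ?_
  rw [st16_det_updateColumn]

/-- Sum additivity of the determinant in a column. -/
theorem st16_det_updateColumn_sum {R : Type*} [CommRing R] {m : ℕ}
    (M : Matrix (Fin m) (Fin m) R) (c : Fin m) {ι : Type*} (s : Finset ι) (g : ι → Fin m → R) :
    ∑ i ∈ s, (M.updateCol c (g i)).det = (M.updateCol c (∑ i ∈ s, g i)).det := by
  classical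
  induction s using Finset.induction_on with
  | empty =>
    rw [Finset.sum_empty, Finset.sum_empty]
    symm
    exact det_eq_zero_of_column_eq_zero c fun i => by simp
  | @insert a s ha ih =>
    rw [Finset.sum_insert ha, Finset.sum_insert ha, det_updateCol_add, ih]

end Aux

/-- Let `k` be a field, `n ≥ 2`, and `φ : Matrix n n k → Matrix n n k` a
`k`-linear map. Let `P ∈ k[x_{ij}]` be the determinant of the matrix of linear forms whose
`(i,j)` entry is the `(i,j)` coordinate of `φ` applied to the generic matrix `(x_{ij})`.
Then `φ` is bijective if and only if for every nonzero `v ∈ Matrix n n k`, the directional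
derivative `Σ_{ij} v_{ij}·∂P/∂x_{ij}` is a nonzero polynomial. -/
theorem statement_16 {k : Type*} [Field k] (n : ℕ) (hn : 2 ≤ n)
    (φ : Matrix (Fin n) (Fin n) k →ₗ[k] Matrix (Fin n) (Fin n) k)
    (P : MvPolynomial (Fin n × Fin n) k)
    (hP : P = (Matrix.of fun i j : Fin n =>
        ∑ p : Fin n × Fin n,
          MvPolynomial.X p *
            (MvPolynomial.C (φ (Matrix.single p.1 p.2 1) i j) :
              MvPolynomial (Fin n × Fin n) k)).det) :
    Function.Bijective φ ↔
      ∀ v : Matrix (Fin n) (Fin n) k, v ≠ 0 →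
        (∑ p : Fin n × Fin n,
          MvPolynomial.C (v p.1 p.2) * (MvPolynomial.pderiv p) P) ≠ 0 := by
  classical
  set M : Matrix (Fin n) (Fin n) (MvPolynomial (Fin n × Fin n) k) :=
    Matrix.of fun i j : Fin n =>
      ∑ p : Fin n × Fin n,
        MvPolynomial.X p *
          (MvPolynomial.C (φ (Matrix.single p.1 p.2 1) i j) :
            MvPolynomial (Fin n × Fin n) k) with hM
  -- linear combination of standard basis matrices
  have hlin : ∀ u : Matrix (Fin n) (Fin n) k,
      ∑ p : Fin n × Fin n, u p.1 p.2 • φ (Matrix.single p.1 p.2 1) = φ u := by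
    intro u
    simp_rw [← _root_.map_smul]
    rw [← map_sum]
    congr 1
    simp_rw [smul_single, smul_eq_mul, mul_one]
    rw [Fintype.sum_prod_type]
    exact (matrix_eq_sum_single u).symm
  -- derivative of entries of M
  have hMD : ∀ (p : Fin n × Fin n) (r c : Fin n),
      pderiv p (M r c) = MvPolynomial.C (φ (Matrix.single p.1 p.2 1) r c) := by
    intro p r c
    show pderiv p (∑ q : Fin n × Fin n,
        X q * MvPolynomial.C (φ (Matrix.single q.1 q.2 1) r c)) = _
    rw [map_sum, Finset.sum_eq_single p]
    · rw [pderiv_mul, pderiv_C, mul_zero, add_zero, pderiv_X_self, one_mul]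
    · intro q _ hq
      rw [pderiv_mul, pderiv_C, mul_zero, add_zero, pderiv_X_of_ne hq, zero_mul]
    · simp
  -- key formula: the directional derivative as a sum of determinants
  have key : ∀ v : Matrix (Fin n) (Fin n) k,
      (∑ p : Fin n × Fin n,
          MvPolynomial.C (v p.1 p.2) * (MvPolynomial.pderiv p) P)
        = ∑ c : Fin n,
            (M.updateCol c fun r => MvPolynomial.C ((φ v) r c)).det := by
    intro v
    rw [hP]
    simp_rw [st16_pderiv_det, Finset.mul_sum]
    rw [Finset.sum_comm]
    refine Finset.sum_congr rfl fun c _ => ?_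
    have h3 : ∀ p : Fin n × Fin n,
        MvPolynomial.C (v p.1 p.2) * (M.updateCol c fun r => pderiv p (M r c)).det
          = (M.updateCol c fun r =>
              MvPolynomial.C (v p.1 p.2 * φ (Matrix.single p.1 p.2 1) r c)).det := by
      intro p
      have hcol : ((MvPolynomial.C (v p.1 p.2) : MvPolynomial (Fin n × Fin n) k) •
            fun r : Fin n => pderiv p (M r c)) =
          fun r => MvPolynomial.C (v p.1 p.2 * φ (Matrix.single p.1 p.2 1) r c) := by
        funext r
        rw [Pi.smul_apply, hMD, smul_eq_mul, ← C_mul]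
      rw [← det_updateCol_smul, hcol]
    simp_rw [h3]
    rw [st16_det_updateColumn_sum]
    have hcol2 : (∑ p : Fin n × Fin n, fun r : Fin n =>
          (MvPolynomial.C (v p.1 p.2 * φ (Matrix.single p.1 p.2 1) r c) :
            MvPolynomial (Fin n × Fin n) k))
        = fun r : Fin n => (MvPolynomial.C ((φ v) r c) :
            MvPolynomial (Fin n × Fin n) k) := by
      funext r
      rw [Finset.sum_apply, ← map_sum (MvPolynomial.C : k →+* MvPolynomial (Fin n × Fin n) k)]
      congr 1
      have h2 := congrArg (fun m => m r c) (hlin v)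
      simpa [Matrix.sum_apply, Matrix.smul_apply, smul_eq_mul] using h2
    rw [hcol2]
  constructor
  · -- bijective → directional derivatives nonzero
    intro hb v hv
    have hw : φ v ≠ 0 := fun h0 => hv (hb.injective (by rw [h0, map_zero]))
    obtain ⟨r, c, hrc⟩ : ∃ r c, (φ v) r c ≠ 0 := by
      by_contra hco
      push_neg at hco
      exact hw (by ext i j; simpa using hco i j)
    set π : Equiv.Perm (Fin n) := Equiv.swap c r with hπ
    have hπc : π c = r := Equiv.swap_apply_left c r
    set B : Matrix (Fin n) (Fin n) k :=
      Matrix.of (fun a b => if b = c then 0 else if a = π b then 1 else 0) with hB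
    obtain ⟨A, hA⟩ := hb.surjective B
    intro heq
    rw [key v] at heq
    set F : MvPolynomial (Fin n × Fin n) k →+* k :=
      (MvPolynomial.eval fun p : Fin n × Fin n => A p.1 p.2) with hF
    have hFM : M.map F = B := by
      ext a b
      rw [map_apply]
      show F (∑ q : Fin n × Fin n,
          X q * MvPolynomial.C (φ (Matrix.single q.1 q.2 1) a b)) = B a b
      rw [map_sum]
      simp only [hF, _root_.map_mul, eval_X, eval_C]
      have h2 := congrArg (fun m => m a b) (hlin A)
      simp only [Matrix.sum_apply, Matrix.smul_apply, smul_eq_mul] at h2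
      rw [h2, hA]
    have h0 : ∑ c' : Fin n, ((B.updateCol c' fun r' => (φ v) r' c').det) = 0 := by
      have h2 := congrArg F heq
      rw [map_sum, map_zero] at h2
      rw [← h2]
      refine Finset.sum_congr rfl fun c' _ => ?_
      rw [RingHom.map_det, RingHom.mapMatrix_apply, map_updateCol, hFM]
      have hcomp : (⇑F ∘ fun r0 => MvPolynomial.C ((φ v) r0 c')) = fun r' => (φ v) r' c' := by
        funext r'
        simp [hF]
      rw [hcomp]
    have h1 : ∀ c' : Fin n, c' ≠ c →
        ((B.updateCol c' fun r' => (φ v) r' c').det) = 0 := by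
      intro c' hne
      apply det_eq_zero_of_column_eq_zero c
      intro i
      rw [updateCol_apply, if_neg (fun h => hne h.symm)]
      simp [hB]
    rw [Finset.sum_eq_single c (fun b _ hb' => h1 b hb') (by simp)] at h0
    set g : Fin n → k := fun r' => (φ v) r' c with hg
    have hU : B.updateCol c g =
        ((1 : Matrix (Fin n) (Fin n) k).updateCol c fun a => g (π a)).submatrix π.symm id := by
      ext a b
      rcases eq_or_ne b c with rfl | hbc
      · simp [updateCol_self, submatrix_apply]
      · simp only [submatrix_apply, id_eq, updateCol_apply, if_neg hbc, hB, Matrix.of_apply,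
          one_apply]
        by_cases h : a = π b
        · rw [if_pos h, if_pos (by rw [h, Equiv.symm_apply_apply])]
        · rw [if_neg h, if_neg (fun hh => h (by rw [← hh, Equiv.apply_symm_apply]))]
    have hdet : (B.updateCol c g).det = ((Equiv.Perm.sign π.symm : ℤ) : k) * g r := by
      rw [hU, det_permute]
      congr 1
      rw [← cramer_apply, cramer_one]
      simp [hπc]
    rw [h0, eq_comm] at hdet
    rcases Int.units_eq_one_or (Equiv.Perm.sign π.symm) with hs | hs <;> rw [hs] at hdet
    · simp only [Units.val_one, Int.cast_one, one_mul] at hdet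
      exact hrc hdet
    · simp only [Units.val_neg, Units.val_one, Int.cast_neg, Int.cast_one, neg_mul, one_mul,
        neg_eq_zero] at hdet
      exact hrc hdet
  · -- directional derivatives nonzero → bijective
    intro h
    have hker : ∀ v, φ v = 0 → v = 0 := by
      intro v hv
      by_contra hv0
      refine h v hv0 ?_
      rw [key v, hv]
      refine Finset.sum_eq_zero fun c _ => ?_
      exact det_eq_zero_of_column_eq_zero c fun i => by simp
    have hinj : Function.Injective φ := by
      intro a b hab
      have := hker (a - b) (by rw [map_sub, hab, sub_self])
      exact sub_eq_zero.mp this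
    exact ⟨hinj, LinearMap.injective_iff_surjective.mp hinj⟩
end

section
/- Let k be a field, let N ≥ 2 and d ≥ 3 be integers, and assume the characteristic of k divides neither d nor d−1. In R = k[x₀,…,x_N] let F = x₀·x₁^{d−1} + Σ_{j=2}^N x_j^d and let J be the ideal generated by the partial derivatives of F. Then: (1) the radical of J equals the ideal (x₁,…,x_N), so the hypersurface D = V(F) is singular exactly at the single point (1:0:⋯:0); (2) the tuple ((d−1)x₀, −x₁, 0, …, 0) is a nonzero syzygy of (∂F/∂x₀, …, ∂F/∂x_N) with homogeneous linear entries, while the only syzygy with constant entries is zero. -/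
open MvPolynomial

/-- Let `k` be a field, `N ≥ 2`, `d ≥ 3`, with `char k` dividing neither
`d` nor `d − 1`. In `R = k[x₀, …, x_N]` let `F = x₀·x₁^{d−1} + Σ_{j=2}^N x_j^d` and let `J`
be its Jacobian ideal. Then: (1) the radical of `J` equals `(x₁, …, x_N)`; (2) the tuple
`((d−1)x₀, −x₁, 0, …, 0)` is a nonzero syzygy of the partial derivatives of `F` with
homogeneous linear entries, while the only syzygy with constant entries is zero. -/
theorem statement_17 {k : Type*} [Field k] (N d : ℕ) (hN : 2 ≤ N) (hd : 3 ≤ d)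
    (hchar_d : ¬ (ringChar k ∣ d)) (hchar_d1 : ¬ (ringChar k ∣ (d - 1)))
    (F : MvPolynomial (Fin (N + 1)) k)
    (hF : F = MvPolynomial.X 0 * MvPolynomial.X 1 ^ (d - 1)
        + ∑ j ∈ Finset.univ.filter (fun j : Fin (N + 1) => 2 ≤ (j : ℕ)),
            MvPolynomial.X j ^ d)
    (a : Fin (N + 1) → MvPolynomial (Fin (N + 1)) k)
    (ha : a = fun i =>
      if i = 0 then MvPolynomial.C ((d - 1 : ℕ) : k) * MvPolynomial.X 0
      else if i = 1 then - MvPolynomial.X 1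
      else 0) :
    (Ideal.span (Set.range fun i => (MvPolynomial.pderiv i) F)).radical
        = Ideal.span {f | ∃ i : Fin (N + 1), i ≠ 0 ∧ f = MvPolynomial.X i} ∧
    (∀ i, (a i).IsHomogeneous 1) ∧
    a ≠ 0 ∧
    (∑ i, a i * (MvPolynomial.pderiv i) F) = 0 ∧
    (∀ b : Fin (N + 1) → k,
      (∑ i, MvPolynomial.C (b i) * (MvPolynomial.pderiv i) F) = 0 → b = 0) := by
  classical
  -- basic numerics on `Fin (N+1)`
  have hval1 : ((1 : Fin (N+1)) : ℕ) = 1 := by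
    rw [Fin.val_one']; exact Nat.mod_eq_of_lt (by omega)
  have h10 : (1 : Fin (N+1)) ≠ 0 := by
    rw [Ne, Fin.ext_iff, hval1, Fin.val_zero]; omega
  have tri : ∀ i : Fin (N+1), i = 0 ∨ i = 1 ∨ 2 ≤ (i : ℕ) := by
    intro i
    simp only [Fin.ext_iff, hval1, Fin.val_zero]
    omega
  have hge2 : ∀ i : Fin (N+1), 2 ≤ (i : ℕ) → i ≠ 0 ∧ i ≠ 1 := by
    intro i hi
    constructor <;> rintro rfl
    · simp at hi
    · rw [hval1] at hi; omega
  have hn20 : ¬ (2 ≤ ((0 : Fin (N+1)) : ℕ)) := by simp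
  have hn21 : ¬ (2 ≤ ((1 : Fin (N+1)) : ℕ)) := by rw [hval1]; omega
  -- nonvanishing of `d` and `d-1` in `k`
  haveI := ringChar.charP k
  have hdk : ((d : ℕ) : k) ≠ 0 :=
    fun h => hchar_d ((CharP.cast_eq_zero_iff k (ringChar k) d).mp h)
  have hd1k : (((d - 1 : ℕ)) : k) ≠ 0 :=
    fun h => hchar_d1 ((CharP.cast_eq_zero_iff k (ringChar k) (d-1)).mp h)
  -- the entries of a
  have ha0 : a 0 = C ((d - 1 : ℕ) : k) * X 0 := by rw [ha]; simp
  have ha1 : a 1 = - X 1 := by rw [ha]; simp [h10]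
  have haj : ∀ i : Fin (N+1), i ≠ 0 → i ≠ 1 → a i = 0 := by
    intro i h0 h1
    rw [ha]; simp [h0, h1]
  -- the partial derivatives of F
  have hsum : ∀ i : Fin (N+1), pderiv i (∑ j ∈ Finset.univ.filter (fun j : Fin (N + 1) => 2 ≤ (j : ℕ)), (X j ^ d : MvPolynomial (Fin (N+1)) k))
      = if 2 ≤ (i:ℕ) then C ((d:ℕ):k) * X i ^ (d-1) else 0 := by
    intro i
    rw [map_sum]
    rw [Finset.sum_congr rfl (g := fun j => if j = i then C ((d:ℕ):k) * X i ^ (d-1) else 0)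
      (fun j hj => ?_)]
    · simp [Finset.sum_ite_eq']
    · rcases eq_or_ne j i with rfl | h
      · simp [pderiv_pow, pderiv_X_self, C_eq_coe_nat]
      · simp [pderiv_pow, pderiv_X_of_ne h, h]
  have hpd0 : pderiv 0 F = (X 1 ^ (d-1) : MvPolynomial (Fin (N+1)) k) := by
    rw [hF, map_add, hsum, if_neg hn20, add_zero]
    simp [pderiv_mul, pderiv_pow, pderiv_X_of_ne h10]
  have hpd1 : pderiv 1 F = C ((d-1:ℕ):k) * (X 0 * X 1 ^ (d-2)) := by
    rw [hF, map_add, hsum, if_neg hn21, add_zero]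
    simp [pderiv_mul, pderiv_pow, pderiv_X_of_ne h10.symm, C_eq_coe_nat, Nat.sub_sub]
    ring
  have hpdj : ∀ j : Fin (N+1), 2 ≤ (j:ℕ) → pderiv j F = C ((d:ℕ):k) * X j ^ (d-1) := by
    intro j hj
    obtain ⟨hj0, hj1⟩ := hge2 j hj
    rw [hF, map_add, hsum, if_pos hj]
    simp [pderiv_mul, pderiv_pow, pderiv_X_of_ne hj0.symm, pderiv_X_of_ne hj1.symm]
  -- the ideal I and its radicality
  set I : Ideal (MvPolynomial (Fin (N+1)) k) :=
    Ideal.span {f | ∃ i : Fin (N + 1), i ≠ 0 ∧ f = MvPolynomial.X i} with hIdef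
  have hIX : ∀ i : Fin (N+1), i ≠ 0 → X i ∈ I :=
    fun i hi => Ideal.subset_span ⟨i, hi, rfl⟩
  have hset : {f | ∃ i : Fin (N + 1), i ≠ 0 ∧ f = (X i : MvPolynomial (Fin (N+1)) k)}
      = MvPolynomial.X '' {i | i ≠ 0} := by
    ext f
    constructor
    · rintro ⟨i, hi, rfl⟩; exact ⟨i, hi, rfl⟩
    · rintro ⟨i, hi, rfl⟩; exact ⟨i, hi, rfl⟩
  have hrad : I.IsRadical := by
    rw [hIdef, hset]
    set π : MvPolynomial (Fin (N+1)) k →ₐ[k] MvPolynomial (Fin (N+1)) k :=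
      aeval (fun i => if i = 0 then X 0 else 0) with hπ
    have hmono : ∀ (m : Fin (N+1) →₀ ℕ) (c : k), (∀ i, i ≠ 0 → m i = 0) →
        π (monomial m c) = monomial m c := by
      intro m c hm
      have hms : m = Finsupp.single 0 (m 0) := by
        ext i
        rcases eq_or_ne i 0 with rfl | hi
        · simp
        · rw [hm i hi, Finsupp.single_apply, if_neg (by exact fun h => hi h.symm)]
      rw [aeval_monomial]
      rw [hms, Finsupp.prod_single_index (by simp)]
      simp [← hms, X_pow_eq_monomial, algebraMap_eq, C_mul_monomial, mul_one, ← hms]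
    have hmono0 : ∀ (m : Fin (N+1) →₀ ℕ) (c : k), (∃ i, i ≠ 0 ∧ m i ≠ 0) →
        π (monomial m c) = 0 := by
      rintro m c ⟨i, hi0, hmi⟩
      rw [aeval_monomial]
      rw [Finsupp.prod]
      rw [Finset.prod_eq_zero (Finsupp.mem_support_iff.mpr hmi) (by simp [if_neg hi0, zero_pow hmi])]
      rw [mul_zero]
    have hker : ∀ x : MvPolynomial (Fin (N+1)) k, π x = 0 →
        x ∈ Ideal.span (MvPolynomial.X '' {i : Fin (N+1) | i ≠ 0} : Set (MvPolynomial (Fin (N+1)) k)) := by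
      intro x hx
      rw [mem_ideal_span_X_image]
      intro m hm
      by_contra hcon
      push_neg at hcon
      have hall : ∀ i : Fin (N+1), i ≠ 0 → m i = 0 := fun i hi => hcon i hi
      have hco : coeff m (π x) = coeff m x := by
        conv_lhs => rw [x.as_sum, map_sum]
        rw [MvPolynomial.coeff_sum]
        rw [Finset.sum_eq_single m (fun m' hm' hne => ?_) (fun h => absurd hm h)]
        · rw [hmono m _ hall, coeff_monomial, if_pos rfl]
        · by_cases hc : ∀ i : Fin (N+1), i ≠ 0 → m' i = 0
          · rw [hmono m' _ hc, coeff_monomial, if_neg hne]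
          · push_neg at hc
            obtain ⟨i, hi, hii⟩ := hc
            rw [hmono0 m' _ ⟨i, hi, hii⟩, coeff_zero]
      rw [hx, coeff_zero] at hco
      exact (MvPolynomial.mem_support_iff.mp hm) hco.symm
    have hIker : Ideal.span (MvPolynomial.X '' {i : Fin (N+1) | i ≠ 0} : Set (MvPolynomial (Fin (N+1)) k))
        ≤ RingHom.ker (π : MvPolynomial (Fin (N+1)) k →+* MvPolynomial (Fin (N+1)) k) := by
      rw [Ideal.span_le]
      rintro f ⟨i, hi, rfl⟩
      simp [RingHom.mem_ker, hπ, if_neg hi]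
    intro x hx
    obtain ⟨n, hn⟩ := hx
    apply hker
    have hzn : (π x) ^ n = 0 := by
      rw [← map_pow]
      exact hIker hn
    rcases n with _ | n
    · rw [pow_zero] at hzn
      exact absurd hzn one_ne_zero
    · exact pow_eq_zero_iff (Nat.succ_ne_zero n) |>.mp hzn
  set J : Ideal (MvPolynomial (Fin (N+1)) k) :=
    Ideal.span (Set.range fun i => (MvPolynomial.pderiv i) F) with hJdef
  -- Part 1
  have part1 : J.radical = I := by
    apply le_antisymm
    · refine le_trans (Ideal.radical_mono ?_) hrad
      rw [hJdef, Ideal.span_le]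
      rintro f ⟨i, rfl⟩
      dsimp only
      rcases tri i with rfl | rfl | h2
      · rw [hpd0, show d - 1 = (d-2) + 1 from by omega, pow_succ]
        exact Ideal.mul_mem_left _ _ (hIX 1 h10)
      · rw [hpd1, show d - 2 = (d-3) + 1 from by omega, pow_succ, ← mul_assoc, ← mul_assoc]
        exact Ideal.mul_mem_left _ _ (hIX 1 h10)
      · rw [hpdj i h2, show d - 1 = (d-2) + 1 from by omega, pow_succ, ← mul_assoc]
        exact Ideal.mul_mem_left _ _ (hIX i (hge2 i h2).1)
    · rw [hIdef, Ideal.span_le]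
      rintro f ⟨i, hi, rfl⟩
      rw [SetLike.mem_coe, Ideal.mem_radical_iff]
      rcases tri i with rfl | rfl | h2
      · exact absurd rfl hi
      · exact ⟨d - 1, by rw [← hpd0]; exact Ideal.subset_span ⟨0, rfl⟩⟩
      · refine ⟨d - 1, ?_⟩
        have hXi : (X i : MvPolynomial (Fin (N+1)) k) ^ (d-1)
            = C ((d:k)⁻¹) * (C ((d:ℕ):k) * X i ^ (d-1)) := by
          rw [← mul_assoc, ← C_mul, inv_mul_cancel₀ hdk, C_1, one_mul]
        rw [hXi, ← hpdj i h2]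
        exact Ideal.mul_mem_left _ _ (Ideal.subset_span ⟨i, rfl⟩)
  -- Part 2
  have part2 : ∀ i, (a i).IsHomogeneous 1 := by
    intro i
    rcases tri i with rfl | rfl | h2
    · rw [ha0]
      simpa using (isHomogeneous_C _ ((d - 1 : ℕ) : k)).mul (isHomogeneous_X _ 0)
    · rw [ha1]
      exact (isHomogeneous_X _ 1).neg
    · obtain ⟨hi0, hi1⟩ := hge2 i h2
      rw [haj i hi0 hi1]
      exact isHomogeneous_zero _ _ _
  -- Part 3
  have part3 : a ≠ 0 := by
    intro h
    have h1 := congrFun h 1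
    rw [ha1, Pi.zero_apply, neg_eq_zero] at h1
    exact X_ne_zero 1 h1
  -- Part 4
  have part4 : (∑ i, a i * (MvPolynomial.pderiv i) F) = 0 := by
    rw [← Finset.sum_subset (Finset.subset_univ ({0, 1} : Finset (Fin (N+1))))
      (fun i _ hi => ?_)]
    · rw [Finset.sum_pair h10.symm, ha0, ha1, hpd0, hpd1,
        show d - 1 = (d-2) + 1 from by omega]
      ring
    · simp only [Finset.mem_insert, Finset.mem_singleton, not_or] at hi
      rw [haj i hi.1 hi.2, zero_mul]
  -- Part 5
  have part5 : ∀ b : Fin (N + 1) → k,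
      (∑ i, MvPolynomial.C (b i) * (MvPolynomial.pderiv i) F) = 0 → b = 0 := by
    intro b hb
    set μ : Fin (N+1) → (Fin (N+1) →₀ ℕ) := fun i =>
      if i = 0 then Finsupp.single 1 (d-1)
      else if i = 1 then Finsupp.single 0 1 + Finsupp.single 1 (d-2)
      else Finsupp.single i (d-1) with hμdef
    set c : Fin (N+1) → k := fun i =>
      if i = 0 then 1 else if i = 1 then ((d-1:ℕ):k) else ((d:ℕ):k) with hcdef
    have hμ0 : μ 0 = Finsupp.single 1 (d-1) := by rw [hμdef]; simp
    have hμ1 : μ 1 = Finsupp.single 0 1 + Finsupp.single 1 (d-2) := by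
      rw [hμdef]; simp [h10]
    have hμj : ∀ i : Fin (N+1), i ≠ 0 → i ≠ 1 → μ i = Finsupp.single i (d-1) := by
      intro i h0 h1
      rw [hμdef]; simp [h0, h1]
    have hc0 : c 0 = 1 := by rw [hcdef]; simp
    have hc1 : c 1 = ((d-1:ℕ):k) := by
      rw [hcdef]; simp [h10]
    have hcj : ∀ i : Fin (N+1), i ≠ 0 → i ≠ 1 → c i = ((d:ℕ):k) := by
      intro i h0 h1
      rw [hcdef]; simp [h0, h1]
    have hd1 : d - 1 ≠ 0 := by omega
    have hterm : ∀ i, C (b i) * pderiv i F = monomial (μ i) (b i * c i) := by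
      intro i
      rcases tri i with rfl | rfl | h2
      · rw [hpd0, hμ0, hc0, X_pow_eq_monomial, C_mul_monomial, mul_one]
      · rw [hpd1, hμ1, hc1, X_pow_eq_monomial,
          ← pow_one (X 0 : MvPolynomial (Fin (N+1)) k), X_pow_eq_monomial,
          monomial_mul, C_mul_monomial, C_mul_monomial]
        congr 1
        ring
      · obtain ⟨hi0, hi1⟩ := hge2 i h2
        rw [hpdj i h2, hμj i hi0 hi1, hcj i hi0 hi1, X_pow_eq_monomial,
          C_mul_monomial, C_mul_monomial, mul_one]
    have hAB : ¬ (Finsupp.single (1 : Fin (N+1)) (d-1)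
        = Finsupp.single 0 1 + Finsupp.single 1 (d-2)) := by
      intro h
      have h0 := DFunLike.congr_fun h 0
      rw [Finsupp.add_apply, Finsupp.single_eq_of_ne' h10, Finsupp.single_eq_same,
        Finsupp.single_eq_of_ne' h10] at h0
      simp at h0
    have hAC : ∀ j : Fin (N+1), j ≠ 1 →
        ¬ (Finsupp.single (1:Fin (N+1)) (d-1) = Finsupp.single j (d-1)) := by
      intro j hj1 h
      have h0 := DFunLike.congr_fun h 1
      rw [Finsupp.single_eq_same, Finsupp.single_eq_of_ne' hj1] at h0
      exact hd1 h0
    have hBC : ∀ j : Fin (N+1), j ≠ 0 →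
        ¬ (Finsupp.single (0:Fin (N+1)) 1 + Finsupp.single 1 (d-2)
            = Finsupp.single j (d-1)) := by
      intro j hj0 h
      have h0 := DFunLike.congr_fun h 0
      rw [Finsupp.add_apply, Finsupp.single_eq_same, Finsupp.single_eq_of_ne' h10,
        Finsupp.single_eq_of_ne' hj0] at h0
      simp at h0
    have hμinj : Function.Injective μ := by
      intro i j h
      rcases tri i with rfl | rfl | hi2 <;> rcases tri j with rfl | rfl | hj2
      · rfl
      · rw [hμ0, hμ1] at h
        exact (hAB h).elim
      · obtain ⟨hj0, hj1⟩ := hge2 j hj2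
        rw [hμ0, hμj j hj0 hj1] at h
        exact (hAC j hj1 h).elim
      · rw [hμ0, hμ1] at h
        exact (hAB h.symm).elim
      · rfl
      · obtain ⟨hj0, hj1⟩ := hge2 j hj2
        rw [hμ1, hμj j hj0 hj1] at h
        exact (hBC j hj0 h).elim
      · obtain ⟨hi0, hi1⟩ := hge2 i hi2
        rw [hμ0, hμj i hi0 hi1] at h
        exact (hAC i hi1 h.symm).elim
      · obtain ⟨hi0, hi1⟩ := hge2 i hi2
        rw [hμ1, hμj i hi0 hi1] at h
        exact (hBC i hi0 h.symm).elim
      · obtain ⟨hi0, hi1⟩ := hge2 i hi2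
        obtain ⟨hj0, hj1⟩ := hge2 j hj2
        rw [hμj i hi0 hi1, hμj j hj0 hj1] at h
        exact Finsupp.single_left_injective hd1 h
    have hco : ∀ i0 : Fin (N+1), b i0 * c i0 = 0 := by
      intro i0
      have h := congrArg (coeff (μ i0)) hb
      simp only [hterm] at h
      rw [MvPolynomial.coeff_sum, coeff_zero] at h
      rw [Finset.sum_eq_single i0
        (fun i _ hne => by rw [coeff_monomial, if_neg (fun hc => hne (hμinj hc))])
        (fun hni => absurd (Finset.mem_univ i0) hni)] at h
      rw [coeff_monomial, if_pos rfl] at h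
      exact h
    funext i
    rcases tri i with rfl | rfl | h2
    · have h0 := hco 0
      rw [hc0, mul_one] at h0
      simpa using h0
    · have h0 := hco 1
      rw [hc1] at h0
      simpa using (mul_eq_zero.mp h0).resolve_right hd1k
    · obtain ⟨hi0, hi1⟩ := hge2 i h2
      have h0 := hco i
      rw [hcj i hi0 hi1] at h0
      simpa using (mul_eq_zero.mp h0).resolve_right hdk
  exact ⟨part1, part2, part3, part4, part5⟩
end
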